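/- Let K be a division ring and (G,<) a nonabelian ordered group such that the group ring K[G] is an Ore domain, with Ore field of fractions D ⊆ K((G,<)). Then D is infinite-dimensional over its center. -/
import Mathlib

section Aux
variable {G : Type*} [Group G] [LinearOrder G]
    [CovariantClass G G (· * ·) (· ≤ ·)]
    [CovariantClass G G (Function.swap (· * ·)) (· ≤ ·)]

lemma aux_mul_lt_left {a b : G} (c : G) (h : a < b) : c * a < c * b :=
  lt_of_le_of_ne (mul_le_mul_right h.le c) fun e => h.ne (mul_left_cancel e)

lemma aux_mul_lt_right {a b : G} (c : G) (h : a < b) : a * c < b * c :=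
  lt_of_le_of_ne (mul_le_mul_left h.le c) fun e => h.ne (mul_right_cancel e)

lemma aux_conj_lt {a b : G} (g : G) (h : a < b) : g * a * g⁻¹ < g * b * g⁻¹ :=
  aux_mul_lt_right g⁻¹ (aux_mul_lt_left g h)

lemma aux_pow_lt {a b : G} (h : a < b) : ∀ m : ℕ, a ^ (m + 1) < b ^ (m + 1) := by
  intro m
  induction m with
  | zero => simpa using h
  | succ k ih =>
    calc a ^ (k + 2) = a ^ (k + 1) * a := by rw [pow_succ]
    _ < b ^ (k + 1) * a := aux_mul_lt_right a ih
    _ ≤ b ^ (k + 1) * b := mul_le_mul_right h.le _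
    _ = b ^ (k + 2) := (pow_succ b (k + 1)).symm

lemma aux_pow_inj {a b : G} {m : ℕ} (hm : m ≠ 0) (h : a ^ m = b ^ m) : a = b := by
  obtain ⟨k, rfl⟩ := Nat.exists_eq_succ_of_ne_zero hm
  rcases lt_trichotomy a b with hlt | he | hlt
  · exact absurd h (aux_pow_lt hlt k).ne
  · exact he
  · exact absurd h.symm (aux_pow_lt hlt k).ne

/-- If `x^m` commutes with `y` for some `m ≠ 0`, then `x` commutes with `y`. -/
lemma aux_pow_comm {x y : G} {m : ℕ} (hm : m ≠ 0) (h : x ^ m * y = y * x ^ m) :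
    x * y = y * x := by
  have hz : (y * x * y⁻¹) ^ m = x ^ m := by
    rw [conj_pow, ← h]
    simp [mul_assoc]
  have := aux_pow_inj hm hz
  have : y * x = x * y := by
    have := congrArg (· * y) this
    simpa [mul_assoc] using this
  exact this.symm

end Aux

theorem ore_fraction_field_infinite_dimensional_over_center
    (K G E : Type*) [DivisionRing K] [Group G] [LinearOrder G]
    [CovariantClass G G (· * ·) (· ≤ ·)]
    [CovariantClass G G (Function.swap (· * ·)) (· ≤ ·)]
    [DivisionRing E] (coeff : E → G → K)
    (hext : Function.Injective coeff)
    (hadd : ∀ f g : E, ∀ z : G, coeff (f + g) z = coeff f z + coeff g z)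
    (hwf : ∀ f : E, (Function.support (coeff f)).IsWF)
    (hsurj : ∀ F : G → K, (Function.support F).IsWF → ∃ f : E, coeff f = F)
    (hmul : ∀ f g : E, ∀ z : G, coeff (f * g) z =
      ∑ᶠ p : G × G, if p.1 * p.2 = z then coeff f p.1 * coeff g p.2 else 0)
    (κ : K →+* E) (hκ : ∀ a : K, ∀ z : G, coeff (κ a) z = if z = 1 then a else 0)
    (emb : G → E) (hemb : ∀ g z : G, coeff (emb g) z = if z = g then 1 else 0)
    (hG : ∃ x y : G, x * y ≠ y * x)
    -- `K[G]` is a (right) Ore domain: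
    (hOre : ∀ a b : E, a ∈ Subring.closure (Set.range ⇑κ ∪ Set.range emb) →
      b ∈ Subring.closure (Set.range ⇑κ ∪ Set.range emb) → b ≠ 0 →
      ∃ c ∈ Subring.closure (Set.range ⇑κ ∪ Set.range emb),
      ∃ d ∈ Subring.closure (Set.range ⇑κ ∪ Set.range emb), d ≠ 0 ∧ a * d = b * c) :
    -- `D`, the division subring generated by `K[G]`, is infinite-dimensional over its
    -- centre: there are left linearly independent families of every finite size.
    ∀ n : ℕ, ∃ v : Fin n → E,
      (∀ i, v i ∈ Subfield.closure ((Subring.closure (Set.range ⇑κ ∪ Set.range emb) : Subring E) : Set E)) ∧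
      ∀ c : Fin n → E,
        (∀ i, c i ∈ Subfield.closure ((Subring.closure (Set.range ⇑κ ∪ Set.range emb) : Subring E) : Set E) ∧
          ∀ d ∈ Subfield.closure ((Subring.closure (Set.range ⇑κ ∪ Set.range emb) : Subring E) : Set E),
            c i * d = d * c i) →
        (∑ i, c i * v i = 0) → ∀ i, c i = 0 := by
  classical
  -- basic coefficient facts
  have czero : ∀ z : G, coeff 0 z = 0 := by
    intro z
    have h := hadd 0 0 z
    rw [add_zero] at h
    exact (left_eq_add.mp h)
  have csum : ∀ {n : ℕ} (f : Fin n → E) (z : G),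
      coeff (∑ i, f i) z = ∑ i, coeff (f i) z := by
    intro n f z
    induction n with
    | zero => simpa using czero z
    | succ k ih =>
      rw [Fin.sum_univ_succ, hadd, ih, Fin.sum_univ_succ]
  -- multiplying by a group element on the right shifts coefficients
  have cme : ∀ (f : E) (h z : G), coeff (f * emb h) z = coeff f (z * h⁻¹) := by
    intro f h z
    rw [hmul]
    have hs : ∀ p : G × G, p ≠ (z * h⁻¹, h) →
        (if p.1 * p.2 = z then coeff f p.1 * coeff (emb h) p.2 else 0) = 0 := by
      intro p hp
      rcases eq_or_ne p.2 h with h2 | h2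
      · rcases eq_or_ne (p.1 * p.2) z with h1 | h1
        · exact absurd (Prod.ext (by rw [← h1, h2]; group) h2) hp
        · simp [h1]
      · simp [hemb, h2]
    rw [finsum_eq_single _ _ hs]
    simp [hemb]
  have cem : ∀ (f : E) (h z : G), coeff (emb h * f) z = coeff f (h⁻¹ * z) := by
    intro f h z
    rw [hmul]
    have hs : ∀ p : G × G, p ≠ (h, h⁻¹ * z) →
        (if p.1 * p.2 = z then coeff (emb h) p.1 * coeff f p.2 else 0) = 0 := by
      intro p hp
      rcases eq_or_ne p.1 h with h2 | h2
      · rcases eq_or_ne (p.1 * p.2) z with h1 | h1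
        · exact absurd (Prod.ext h2 (by rw [← h1, h2]; group)) hp
        · simp [h1]
      · simp [hemb, h2]
    rw [finsum_eq_single _ _ hs]
    simp [hemb]
  -- notations
  set S : Set E := Set.range ⇑κ ∪ Set.range emb with hS
  have hembD : ∀ g : G, emb g ∈
      Subfield.closure ((Subring.closure S : Subring E) : Set E) := by
    intro g
    exact Subfield.subset_closure (Subring.subset_closure (Or.inr ⟨g, rfl⟩))
  -- elements commuting with all `emb g` have centrally supported coefficients
  have hconj : ∀ (c : E), (∀ g : G, c * emb g = emb g * c) →
      ∀ (g w : G), coeff c (g * w * g⁻¹) = coeff c w := by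
    intro c hc g w
    have h1 : coeff (c * emb g) (g * w) = coeff (emb g * c) (g * w) := by
      rw [hc g]
    rw [cme, cem] at h1
    simpa [mul_assoc] using h1
  have hcent : ∀ (c : E), (∀ g : G, c * emb g = emb g * c) →
      ∀ w : G, coeff c w ≠ 0 → ∀ g : G, g * w = w * g := by
    intro c hc w hw g
    by_contra hne
    have hne' : g * w * g⁻¹ ≠ w := by
      intro h
      exact hne (by simpa using congrArg (· * g) h)
    -- produce k with k * w * k⁻¹ < w
    obtain ⟨k, hk⟩ : ∃ k : G, k * w * k⁻¹ < w := by
      rcases lt_or_gt_of_ne hne' with h | h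
      · exact ⟨g, h⟩
      · refine ⟨g⁻¹, ?_⟩
        have := aux_conj_lt (a := w) (b := g * w * g⁻¹) g⁻¹ h
        simpa [mul_assoc] using this
    -- strictly descending sequence in the support
    set u : ℕ → G := fun n => k ^ n * w * (k ^ n)⁻¹ with hu
    have hstep : ∀ n : ℕ, u (n + 1) = k ^ n * (k * w * k⁻¹) * (k ^ n)⁻¹ := by
      intro n
      simp only [hu, pow_succ]
      group
    have hanti : StrictAnti u := by
      apply strictAnti_nat_of_succ_lt
      intro n
      rw [hstep n]
      exact aux_conj_lt (k ^ n) hk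
    have hmem : ∀ n : ℕ, u n ∈ Function.support (coeff c) := by
      intro n
      induction n with
      | zero => simpa [hu] using hw
      | succ m ih =>
        have : coeff c (u (m + 1)) = coeff c (u m) := by
          have h2 : u (m + 1) = k * u m * k⁻¹ := by
            simp only [hu, pow_succ']
            group
          rw [h2]
          exact hconj c hc k (u m)
        simpa [Function.mem_support, this] using ih
    exact (Set.isWF_iff_no_descending_seq.mp (hwf c)) u hanti hmem
  -- pick a noncentral element
  obtain ⟨x, y, hxy⟩ := hG
  intro n
  refine ⟨fun i => emb (x ^ (i : ℕ)), fun i => hembD _, ?_⟩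
  intro c hc hsum i
  -- each c i commutes with every emb g
  have hcomm : ∀ i : Fin n, ∀ g : G, c i * emb g = emb g * c i := by
    intro i g
    exact (hc i).2 (emb g) (hembD g)
  -- show coeff (c i) = 0 everywhere
  apply hext
  funext w
  rw [czero]
  by_contra hne
  -- w commutes with everything
  have hwcent : ∀ g : G, g * w = w * g := hcent (c i) (hcomm i) w hne
  -- evaluate coefficient of the sum at z = w * x^i
  have h0 : coeff (∑ j, c j * emb (x ^ (j : ℕ))) (w * x ^ (i : ℕ)) = 0 := by
    rw [hsum]; exact czero _
  rw [csum] at h0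
  have hterm : ∀ j : Fin n, coeff (c j * emb (x ^ (j : ℕ))) (w * x ^ (i : ℕ))
      = coeff (c j) (w * x ^ (i : ℕ) * (x ^ (j : ℕ))⁻¹) := fun j => cme _ _ _
  -- all terms with j ≠ i vanish
  have hvanish : ∀ j : Fin n, j ≠ i →
      coeff (c j * emb (x ^ (j : ℕ))) (w * x ^ (i : ℕ)) = 0 := by
    intro j hji
    rw [hterm j]
    by_contra hnz
    -- then w * x^i * (x^j)⁻¹ commutes with everything
    have ht : ∀ g : G, g * (w * x ^ (i : ℕ) * (x ^ (j : ℕ))⁻¹)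
        = (w * x ^ (i : ℕ) * (x ^ (j : ℕ))⁻¹) * g :=
      hcent (c j) (hcomm j) _ hnz
    -- hence x^i * (x^j)⁻¹ commutes with everything
    have hs : ∀ g : G, g * (x ^ (i : ℕ) * (x ^ (j : ℕ))⁻¹)
        = (x ^ (i : ℕ) * (x ^ (j : ℕ))⁻¹) * g := by
      intro g
      have h1 : g * (w * (x ^ (i : ℕ) * (x ^ (j : ℕ))⁻¹))
          = w * (x ^ (i : ℕ) * ((x ^ (j : ℕ))⁻¹ * g)) := by
        simpa only [mul_assoc] using ht g
      have h2 := hwcent g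
      have h3 : w * (g * (x ^ (i : ℕ) * (x ^ (j : ℕ))⁻¹))
          = w * (x ^ (i : ℕ) * (x ^ (j : ℕ))⁻¹ * g) := by
        calc w * (g * (x ^ (i : ℕ) * (x ^ (j : ℕ))⁻¹))
            = (w * g) * (x ^ (i : ℕ) * (x ^ (j : ℕ))⁻¹) := by rw [mul_assoc]
          _ = (g * w) * (x ^ (i : ℕ) * (x ^ (j : ℕ))⁻¹) := by rw [h2]
          _ = g * (w * (x ^ (i : ℕ) * (x ^ (j : ℕ))⁻¹)) := by rw [mul_assoc]
          _ = w * (x ^ (i : ℕ) * ((x ^ (j : ℕ))⁻¹ * g)) := h1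
          _ = w * (x ^ (i : ℕ) * (x ^ (j : ℕ))⁻¹ * g) := by simp only [mul_assoc]
      exact mul_left_cancel h3
    -- derive a contradiction: some positive power of x is central
    rcases lt_or_gt_of_ne (fun h : (j : ℕ) = (i : ℕ) => hji (Fin.ext h)) with hlt | hlt
    · -- j < i : x^(i-j) central
      have hm : (i : ℕ) - (j : ℕ) ≠ 0 := Nat.sub_ne_zero_of_lt hlt
      have hpow : x ^ ((i : ℕ) - (j : ℕ)) = x ^ (i : ℕ) * (x ^ (j : ℕ))⁻¹ := by
        rw [eq_mul_inv_iff_mul_eq, ← pow_add, Nat.sub_add_cancel hlt.le]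
      have := hs y
      rw [← hpow] at this
      exact hxy (aux_pow_comm hm this.symm)
    · -- i < j : x^(j-i) central
      have hm : (j : ℕ) - (i : ℕ) ≠ 0 := Nat.sub_ne_zero_of_lt hlt
      have hpow : x ^ ((j : ℕ) - (i : ℕ)) = (x ^ (i : ℕ) * (x ^ (j : ℕ))⁻¹)⁻¹ := by
        rw [mul_inv_rev, inv_inv, eq_mul_inv_iff_mul_eq, ← pow_add,
          Nat.sub_add_cancel hlt.le]
      have hsy : ∀ g : G, g * (x ^ (i : ℕ) * (x ^ (j : ℕ))⁻¹)⁻¹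
          = (x ^ (i : ℕ) * (x ^ (j : ℕ))⁻¹)⁻¹ * g := by
        intro g
        set s := x ^ (i : ℕ) * (x ^ (j : ℕ))⁻¹
        have h1 := hs g
        calc g * s⁻¹ = s⁻¹ * (s * g) * s⁻¹ := by group
        _ = s⁻¹ * (g * s) * s⁻¹ := by rw [← h1]
        _ = s⁻¹ * g := by group
      have := hsy y
      rw [← hpow] at this
      exact hxy (aux_pow_comm hm this.symm)
  rw [Finset.sum_eq_single i (fun j _ hj => hvanish j hj)
    (fun h => absurd (Finset.mem_univ i) h)] at h0
  rw [hterm i] at h0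
  rw [mul_inv_cancel_right] at h0
  exact hne h0
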